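/- There is an absolute constant C > 0 such that for all real numbers X, Y, Z ≥ 1, the number of triples (k, ℓ, m) of positive integers satisfying k·ℓ ≤ X, k·m ≤ Y and ℓ·m ≤ Z is at most C·(X·Y·Z)^{1/2}. -/

import Mathlib

open Finset

lemma sqrt_sum_le (n : ℕ) : ∑ m ∈ Finset.Icc 1 n, (1:ℝ)/Real.sqrt m ≤ 2 * Real.sqrt n := by
  induction n with
  | zero => simp
  | succ n ih =>
    rw [Finset.sum_Icc_succ_top (by norm_num)]
    have h1 : Real.sqrt n ^ 2 = n := Real.sq_sqrt (by positivity)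
    have h2 : Real.sqrt ((n:ℝ)+1) ^ 2 = (n:ℝ)+1 := Real.sq_sqrt (by positivity)
    have h3 : (0:ℝ) ≤ Real.sqrt n := Real.sqrt_nonneg _
    have h4 : (0:ℝ) < Real.sqrt ((n:ℝ)+1) := Real.sqrt_pos.2 (by positivity)
    have key : (1:ℝ)/Real.sqrt ((n:ℝ)+1) ≤ 2*Real.sqrt ((n:ℝ)+1) - 2*Real.sqrt n := by
      rw [div_le_iff₀ h4]
      nlinarith [sq_nonneg (Real.sqrt ((n:ℝ)+1) - Real.sqrt n)]
    push_cast
    linarith [ih, key]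

lemma harmonic_telescope (c : ℕ) (hc : 1 ≤ c) : ∀ n : ℕ, c ≤ n →
    ∑ k ∈ Finset.Ioc c n, (1:ℝ)/k ≤ Real.log n - Real.log c := by
  intro n
  induction n with
  | zero => intro h; interval_cases c <;> simp at h ⊢
  | succ n ih =>
    intro h
    rcases Nat.lt_or_ge c (n+1) with h' | h'
    · have hcn : c ≤ n := Nat.lt_succ_iff.1 h'
      rw [Finset.sum_Ioc_succ_top hcn]
      have key : (1:ℝ)/(n+1) ≤ Real.log (n+1) - Real.log n := by
        rcases Nat.eq_zero_or_pos n with rfl | hn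
        · omega
        · have hn' : (0:ℝ) < n := by positivity
          have := Real.log_le_sub_one_of_pos (x := (n:ℝ)/(n+1)) (by positivity)
          rw [Real.log_div (by positivity) (by positivity)] at this
          have : Real.log n - Real.log (n+1) ≤ -(1/(n+1)) := by
            have hh : (n:ℝ)/(n+1) - 1 = -(1/(n+1)) := by field_simp; ring
            linarith [this, hh ▸ this]
          linarith
      have := ih hcn
      push_cast
      push_cast at this key
      linarith
    · have : c = n + 1 := le_antisymm h h'
      subst this; simp

lemma log_le_two_sqrt (t : ℝ) (ht : 0 < t) : Real.log t ≤ 2 * Real.sqrt t := by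
  have h1 : Real.log (Real.sqrt t) = Real.log t / 2 := Real.log_sqrt ht.le
  have h2 := Real.log_le_sub_one_of_pos (Real.sqrt_pos.2 ht)
  nlinarith [Real.sqrt_nonneg t]
lemma sum_min_le (A X : ℝ) (hA : 0 < A) (hX : 0 < X) (n : ℕ) (hn : 1 ≤ n) :
    ∑ k ∈ Finset.Icc 1 n, min A (X/(k:ℝ)) ≤ X + X * max 0 (Real.log (2*A*n/X)) := by
  set c : ℕ := max (Nat.floor (X/A)) 1 with hc
  have hc1 : 1 ≤ c := le_max_right _ _
  have hf : ∀ k : ℕ, 1 ≤ k → (0:ℝ) ≤ min A (X/(k:ℝ)) := by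
    intro k hk; have : (0:ℝ) < k := by exact_mod_cast hk
    exact le_min hA.le (by positivity)
  -- split
  have hsplit : ∑ k ∈ Finset.Icc 1 n, min A (X/(k:ℝ)) ≤
      (∑ k ∈ Finset.Icc 1 c, min A (X/(k:ℝ))) + ∑ k ∈ Finset.Ioc c n, min A (X/(k:ℝ)) := by
    rw [← Finset.sum_union (by
      simp only [Finset.disjoint_left, Finset.mem_Icc, Finset.mem_Ioc]
      omega)]
    apply Finset.sum_le_sum_of_subset_of_nonneg
    · intro k hk; simp only [Finset.mem_Icc, Finset.mem_union, Finset.mem_Ioc] at *; omega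
    · intro k hk _; simp only [Finset.mem_union, Finset.mem_Icc, Finset.mem_Ioc] at hk
      exact hf k (by omega)
  have part1 : ∑ k ∈ Finset.Icc 1 c, min A (X/(k:ℝ)) ≤ X := by
    rcases Nat.eq_zero_or_pos (Nat.floor (X/A)) with h0 | h1
    · have : c = 1 := by omega
      rw [this]
      simp only [Finset.Icc_self, Finset.sum_singleton]
      exact le_trans (min_le_right _ _) (by norm_num)
    · have hcf : c = Nat.floor (X/A) := by omega
      calc ∑ k ∈ Finset.Icc 1 c, min A (X/(k:ℝ)) ≤ ∑ k ∈ Finset.Icc 1 c, A :=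
            Finset.sum_le_sum (fun k _ => min_le_left _ _)
        _ = c * A := by rw [Finset.sum_const, Nat.card_Icc]; simp [mul_comm]
        _ ≤ (X/A) * A := by
            apply mul_le_mul_of_nonneg_right _ hA.le
            rw [hcf]; exact Nat.floor_le (by positivity)
        _ = X := by field_simp
  have hclb : X/(2*A) ≤ (c:ℝ) := by
    rcases le_or_gt (X/A) 2 with h | h
    · have : X/(2*A) ≤ 1 := by
        rw [div_le_one (by positivity)]
        nlinarith [div_le_iff₀ hA |>.1 h]
      calc X/(2*A) ≤ 1 := this
        _ ≤ (c:ℝ) := by exact_mod_cast hc1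
    · have h2 : (Nat.floor (X/A) : ℝ) ≥ X/A - 1 := by
        have := Nat.sub_one_lt_floor (X/A)
        linarith
      have hcf : (c:ℝ) ≥ (Nat.floor (X/A) : ℝ) := by
        have : Nat.floor (X/A) ≤ c := le_max_left _ _
        exact_mod_cast this
      have : X/(2*A) ≤ X/A - 1 := by
        rw [div_le_iff₀ (by positivity : (0:ℝ) < 2*A)]
        have hXA : (X/A)*A = X := by field_simp
        nlinarith [mul_lt_mul_of_pos_right h hA]
      linarith
  have part2 : ∑ k ∈ Finset.Ioc c n, min A (X/(k:ℝ)) ≤ X * max 0 (Real.log (2*A*n/X)) := by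
    rcases le_or_gt n c with h | h
    · rw [Finset.Ioc_eq_empty (by omega)]
      simp only [Finset.sum_empty]
      positivity
    · calc ∑ k ∈ Finset.Ioc c n, min A (X/(k:ℝ)) ≤ ∑ k ∈ Finset.Ioc c n, X * (1/(k:ℝ)) := by
            apply Finset.sum_le_sum; intro k hk
            refine le_trans (min_le_right _ _) (by rw [mul_one_div])
        _ = X * ∑ k ∈ Finset.Ioc c n, (1/(k:ℝ)) := by rw [Finset.mul_sum]
        _ ≤ X * (Real.log n - Real.log c) := by
            apply mul_le_mul_of_nonneg_left (harmonic_telescope c hc1 n h.le) hX.le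
        _ ≤ X * max 0 (Real.log (2*A*n/X)) := by
            apply mul_le_mul_of_nonneg_left _ hX.le
            apply le_max_of_le_right
            have hcpos : (0:ℝ) < c := by exact_mod_cast hc1
            have hnpos : (0:ℝ) < n := by exact_mod_cast hn
            rw [← Real.log_div hnpos.ne' hcpos.ne']
            apply Real.log_le_log (by positivity)
            rw [div_le_div_iff₀ hcpos (by positivity)]
            calc (n:ℝ)*X = X/(2*A)*(2*A*(n:ℝ)) := by field_simp
              _ ≤ (c:ℝ)*(2*A*(n:ℝ)) := mul_le_mul_of_nonneg_right hclb (by positivity)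
              _ = 2*A*(n:ℝ)*c := by ring
    -- done
  linarith [hsplit, part1, part2]
lemma core_count (X Y Z : ℝ) (hX : 1 ≤ X) (hY : 1 ≤ Y) (hZ : 1 ≤ Z)
    (F : Finset (ℕ × ℕ × ℕ))
    (hF : ∀ t ∈ F, 0 < t.1 ∧ 0 < t.2.1 ∧ 0 < t.2.2 ∧
      ((t.1 : ℝ) * t.2.1 ≤ X) ∧ ((t.1 : ℝ) * t.2.2 ≤ Y) ∧ ((t.2.1 : ℝ) * t.2.2 ≤ Z) ∧
      X * (t.2.2:ℝ)^2 ≤ Y * Z) :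
    (F.card : ℝ) ≤ 10 * (X*Y*Z) ^ ((1:ℝ)/2) := by
  have hX0 : (0:ℝ) < X := by linarith
  have hY0 : (0:ℝ) < Y := by linarith
  have hZ0 : (0:ℝ) < Z := by linarith
  set M : ℝ := Real.sqrt (Y*Z/X) with hM
  have hM0 : 0 ≤ M := Real.sqrt_nonneg _
  have hM2 : M^2 = Y*Z/X := Real.sq_sqrt (by positivity)
  set M' : ℕ := Nat.floor M with hM'
  have hM'le : (M':ℝ) ≤ M := Nat.floor_le hM0
  -- every m-coordinate lies in Icc 1 M'
  have hmem : ∀ t ∈ F, t.2.2 ∈ Finset.Icc 1 M' := by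
    intro t ht
    obtain ⟨h1, h2, h3, h4, h5, h6, h7⟩ := hF t ht
    rw [Finset.mem_Icc]
    refine ⟨h3, Nat.le_floor ?_⟩
    rw [hM]
    apply Real.le_sqrt' (by exact_mod_cast h3) |>.2
    rw [le_div_iff₀ hX0]
    linarith [h7]
  rw [Finset.card_eq_sum_card_fiberwise hmem]
  -- per-m bound
  have key : ∀ m ∈ Finset.Icc 1 M',
      (((F.filter fun t => t.2.2 = m).card : ℝ)) ≤
        X * (1 + Real.log 2 + 2 * Real.log (M / m)) := by
    intro m hm
    rw [Finset.mem_Icc] at hm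
    obtain ⟨hm1, hm2⟩ := hm
    have hmR : (1:ℝ) ≤ (m:ℝ) := by exact_mod_cast hm1
    have hmM : (m:ℝ) ≤ M := le_trans (by exact_mod_cast hm2) hM'le
    have hlogMm : 0 ≤ Real.log (M/m) := Real.log_nonneg (by
      rw [le_div_iff₀ (by linarith)]; linarith)
    have hBnonneg : 0 ≤ X * (1 + Real.log 2 + 2 * Real.log (M / m)) := by
      have := Real.log_nonneg (by norm_num : (1:ℝ) ≤ 2)
      positivity
    set Fm := F.filter fun t => t.2.2 = m with hFm
    set Km : ℕ := Nat.floor (Y/(m:ℝ)) with hKm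
    rcases Nat.eq_zero_or_pos Km with hK0 | hK1
    · -- Km = 0 : fiber is empty
      have : Fm = ∅ := by
        rw [Finset.eq_empty_iff_forall_notMem]
        intro t ht
        rw [hFm, Finset.mem_filter] at ht
        obtain ⟨htF, htm⟩ := ht
        obtain ⟨h1, h2, h3, h4, h5, h6, h7⟩ := hF t htF
        have : (t.1:ℝ) ≤ Y/m := by
          rw [le_div_iff₀ (by linarith)]; rw [htm] at h5; linarith
        have : t.1 ≤ Km := Nat.le_floor this
        omega
      rw [this]; simpa using hBnonneg
    · -- fiberwise over k
      have hmemk : ∀ t ∈ Fm, t.1 ∈ Finset.Icc 1 Km := by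
        intro t ht
        rw [hFm, Finset.mem_filter] at ht
        obtain ⟨htF, htm⟩ := ht
        obtain ⟨h1, h2, h3, h4, h5, h6, h7⟩ := hF t htF
        rw [Finset.mem_Icc]
        refine ⟨h1, Nat.le_floor ?_⟩
        rw [le_div_iff₀ (by linarith)]
        rw [htm] at h5; linarith
      rw [Finset.card_eq_sum_card_fiberwise hmemk]
      -- fiber card ≤ min (Z/m) (X/k)
      have fiber : ∀ k ∈ Finset.Icc 1 Km,
          (((Fm.filter fun t => t.1 = k).card : ℝ)) ≤ min (Z/(m:ℝ)) (X/(k:ℝ)) := by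
        intro k hk
        rw [Finset.mem_Icc] at hk
        have hkR : (1:ℝ) ≤ (k:ℝ) := by exact_mod_cast hk.1
        set L : ℕ := min (Nat.floor (Z/(m:ℝ))) (Nat.floor (X/(k:ℝ))) with hL
        have hcard : (Fm.filter fun t => t.1 = k).card ≤ (Finset.Icc 1 L).card := by
          apply Finset.card_le_card_of_injOn (fun t => t.2.1)
          · intro t ht
            simp only [Finset.mem_coe, Finset.mem_filter, hFm] at ht
            obtain ⟨⟨htF, htm⟩, htk⟩ := ht
            obtain ⟨h1, h2, h3, h4, h5, h6, h7⟩ := hF t htF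
            rw [Finset.mem_coe, Finset.mem_Icc, hL, le_min_iff]
            refine ⟨h2, Nat.le_floor ?_, Nat.le_floor ?_⟩
            · rw [le_div_iff₀ (by linarith)]; rw [htm] at h6; linarith
            · rw [le_div_iff₀ (by linarith)]
              rw [htk] at h4; linarith [h4]
          · intro t ht t' ht' he
            simp only [Finset.coe_filter, Set.mem_setOf_eq, hFm, Finset.mem_filter] at ht ht'
            ext
            · rw [ht.2, ht'.2]
            · exact he
            · rw [ht.1.2, ht'.1.2]
        have : ((Finset.Icc 1 L).card : ℝ) ≤ min (Z/(m:ℝ)) (X/(k:ℝ)) := by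
          rw [Nat.card_Icc]
          simp only [Nat.add_sub_cancel]
          rw [le_min_iff]
          constructor
          · calc (L:ℝ) ≤ (Nat.floor (Z/(m:ℝ)) : ℝ) := by exact_mod_cast min_le_left _ _
              _ ≤ Z/(m:ℝ) := Nat.floor_le (by positivity)
          · calc (L:ℝ) ≤ (Nat.floor (X/(k:ℝ)) : ℝ) := by exact_mod_cast min_le_right _ _
              _ ≤ X/(k:ℝ) := Nat.floor_le (by positivity)
        exact le_trans (by exact_mod_cast hcard) this
      have step : ((∑ k ∈ Finset.Icc 1 Km, ((Fm.filter fun t => t.1 = k).card) : ℕ) : ℝ) ≤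
          ∑ k ∈ Finset.Icc 1 Km, min (Z/(m:ℝ)) (X/(k:ℝ)) := by
        push_cast
        exact Finset.sum_le_sum fiber
      refine le_trans step ?_
      have hA : (0:ℝ) < Z/(m:ℝ) := by positivity
      refine le_trans (sum_min_le (Z/(m:ℝ)) X hA hX0 Km hK1) ?_
      -- bound the log term
      have hlog : max 0 (Real.log (2*(Z/(m:ℝ))*Km/X)) ≤ Real.log 2 + 2 * Real.log (M/m) := by
        apply max_le
        · have := Real.log_nonneg (by norm_num : (1:ℝ) ≤ 2)
          linarith
        · have harg : 2*(Z/(m:ℝ))*Km/X ≤ 2*(M/m)^2 := by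
            have hKmle : (Km:ℝ) ≤ Y/m := Nat.floor_le (by positivity)
            have e : 2*(M/(m:ℝ))^2 = 2*(Z/(m:ℝ))*(Y/(m:ℝ))/X := by
              rw [div_pow, hM2]; field_simp
            rw [e]
            gcongr
          calc Real.log (2*(Z/(m:ℝ))*Km/X) ≤ Real.log (2*(M/m)^2) := by
                apply Real.log_le_log (by positivity) harg
            _ = Real.log 2 + 2 * Real.log (M/m) := by
                rw [Real.log_mul (by norm_num) (by positivity), Real.log_pow]
                push_cast; ring
      nlinarith [hlog, hX0.le]
  refine le_trans (by exact_mod_cast Finset.sum_le_sum key) ?_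
  -- sum the per-m bounds
  have hlogsum : ∑ m ∈ Finset.Icc 1 M', Real.log (M/m) ≤ 4 * M := by
    rcases Nat.eq_zero_or_pos M' with h0 | h1
    · rw [h0]; simp; linarith
    · have hM1 : (1:ℝ) ≤ M := le_trans (by exact_mod_cast h1) hM'le
      have e1 : ∀ m ∈ Finset.Icc 1 M', Real.log (M/m) ≤ 2 * Real.sqrt M * (1/Real.sqrt m) := by
        intro m hm
        rw [Finset.mem_Icc] at hm
        have hmR : (1:ℝ) ≤ (m:ℝ) := by exact_mod_cast hm.1
        have h := log_le_two_sqrt (M/m) (by positivity)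
        rw [Real.sqrt_div (by linarith : (0:ℝ) ≤ M)] at h
        have hs : (0:ℝ) < Real.sqrt m := Real.sqrt_pos.2 (by linarith)
        calc Real.log (M/m) ≤ 2 * (Real.sqrt M / Real.sqrt m) := h
          _ = 2 * Real.sqrt M * (1/Real.sqrt m) := by ring
      calc ∑ m ∈ Finset.Icc 1 M', Real.log (M/m)
          ≤ ∑ m ∈ Finset.Icc 1 M', 2 * Real.sqrt M * (1/Real.sqrt m) :=
            Finset.sum_le_sum e1
        _ = 2 * Real.sqrt M * ∑ m ∈ Finset.Icc 1 M', (1/Real.sqrt m) := by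
            rw [Finset.mul_sum]
        _ ≤ 2 * Real.sqrt M * (2 * Real.sqrt M') := by
            apply mul_le_mul_of_nonneg_left (sqrt_sum_le M') (by positivity)
        _ ≤ 2 * Real.sqrt M * (2 * Real.sqrt M) := by
            apply mul_le_mul_of_nonneg_left _ (by positivity)
            have := Real.sqrt_le_sqrt hM'le
            linarith
        _ = 4 * M := by
            have h := Real.mul_self_sqrt (show (0:ℝ) ≤ M by linarith)
            linear_combination 4 * h
  have hsum : ∑ m ∈ Finset.Icc 1 M', X * (1 + Real.log 2 + 2 * Real.log (M / m))
      ≤ X * (1 + Real.log 2) * M' + 2 * X * (4 * M) := by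
    have e : ∀ m : ℕ, X * (1 + Real.log 2 + 2 * Real.log (M / m)) =
        X * (1 + Real.log 2) + 2 * X * Real.log (M / m) := fun m => by ring
    simp_rw [e]
    rw [Finset.sum_add_distrib, Finset.sum_const, ← Finset.mul_sum, Nat.card_Icc,
      nsmul_eq_mul]
    simp only [Nat.add_sub_cancel]
    have h1 := mul_le_mul_of_nonneg_left hlogsum (by positivity : (0:ℝ) ≤ 2*X)
    linarith
  have hlog2 : Real.log 2 ≤ 1 := by
    have := Real.log_two_lt_d9
    linarith
  have hXM : X * M = Real.sqrt (X*Y*Z) := by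
    rw [hM, ← Real.sqrt_sq hX0.le, ← Real.sqrt_mul (by positivity)]
    congr 1
    field_simp
    ring
    rw [Real.sq_sqrt (by positivity)]
  have hrpow : (X*Y*Z) ^ ((1:ℝ)/2) = Real.sqrt (X*Y*Z) := (Real.sqrt_eq_rpow _).symm
  calc ∑ m ∈ Finset.Icc 1 M', X * (1 + Real.log 2 + 2 * Real.log (M / m))
      ≤ X * (1 + Real.log 2) * M' + 2 * X * (4 * M) := hsum
    _ ≤ X * 2 * M + 8 * (X * M) := by
        nlinarith [hlog2, mul_le_mul_of_nonneg_left hM'le (by positivity : (0:ℝ) ≤ 2*X),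
          mul_nonneg hX0.le (Nat.cast_nonneg M' : (0:ℝ) ≤ (M':ℝ)),
          Real.log_nonneg (by norm_num : (1:ℝ) ≤ 2)]
    _ = 10 * (X * M) := by ring
    _ = 10 * (X*Y*Z) ^ ((1:ℝ)/2) := by rw [hXM, hrpow]
/-- There is an absolute constant `C > 0` such that for all reals
`X, Y, Z ≥ 1`, the number of triples of positive integers `(k, ℓ, m)` with
`kℓ ≤ X`, `km ≤ Y`, `ℓm ≤ Z` is at most `C·(XYZ)^{1/2}`. -/
theorem stmt_3 :
    ∃ C : ℝ, 0 < C ∧ ∀ X Y Z : ℝ, 1 ≤ X → 1 ≤ Y → 1 ≤ Z →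
      (({t : ℕ × ℕ × ℕ | 0 < t.1 ∧ 0 < t.2.1 ∧ 0 < t.2.2 ∧
          ((t.1 * t.2.1 : ℕ) : ℝ) ≤ X ∧ ((t.1 * t.2.2 : ℕ) : ℝ) ≤ Y ∧
          ((t.2.1 * t.2.2 : ℕ) : ℝ) ≤ Z}.ncard : ℝ)) ≤
        C * (X * Y * Z) ^ ((1 : ℝ) / 2) := by
  classical
  refine ⟨30, by norm_num, fun X Y Z hX hY hZ => ?_⟩
  set S : Set (ℕ × ℕ × ℕ) := {t : ℕ × ℕ × ℕ | 0 < t.1 ∧ 0 < t.2.1 ∧ 0 < t.2.2 ∧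
      ((t.1 * t.2.1 : ℕ) : ℝ) ≤ X ∧ ((t.1 * t.2.2 : ℕ) : ℝ) ≤ Y ∧
      ((t.2.1 * t.2.2 : ℕ) : ℝ) ≤ Z} with hS
  -- S is finite
  have hprops : ∀ t ∈ S, 0 < t.1 ∧ 0 < t.2.1 ∧ 0 < t.2.2 ∧
      ((t.1:ℝ) * t.2.1 ≤ X) ∧ ((t.1:ℝ) * t.2.2 ≤ Y) ∧ ((t.2.1:ℝ) * t.2.2 ≤ Z) := by
    intro t ht
    obtain ⟨h1, h2, h3, h4, h5, h6⟩ := ht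
    push_cast at h4 h5 h6
    exact ⟨h1, h2, h3, h4, h5, h6⟩
  have hsub : S ⊆ ↑((Finset.Icc 1 (Nat.floor X)) ×ˢ (Finset.Icc 1 (Nat.floor X)) ×ˢ
      (Finset.Icc 1 (Nat.floor Y))) := by
    intro t ht
    obtain ⟨h1, h2, h3, h4, h5, h6⟩ := hprops t ht
    have c1 : (t.1:ℝ) ≥ 1 := by exact_mod_cast h1
    have c2 : (t.2.1:ℝ) ≥ 1 := by exact_mod_cast h2
    have c3 : (t.2.2:ℝ) ≥ 1 := by exact_mod_cast h3
    simp only [Finset.coe_product, Set.mem_prod, Finset.mem_coe, Finset.mem_Icc]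
    refine ⟨⟨h1, Nat.le_floor ?_⟩, ⟨h2, Nat.le_floor ?_⟩, ⟨h3, Nat.le_floor ?_⟩⟩
    · nlinarith
    · nlinarith
    · nlinarith
  have hfin : S.Finite := Set.Finite.subset (Finset.finite_toSet _) hsub
  rw [Set.ncard_eq_toFinset_card S hfin]
  set G : Finset (ℕ × ℕ × ℕ) := hfin.toFinset with hG
  have hGS : ∀ t, t ∈ G ↔ t ∈ S := fun t => Set.Finite.mem_toFinset hfin
  set p1 : ℕ × ℕ × ℕ → Prop := fun t => Z * (t.1:ℝ)^2 ≤ X * Y with hp1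
  set p2 : ℕ × ℕ × ℕ → Prop := fun t => Y * (t.2.1:ℝ)^2 ≤ X * Z with hp2
  set p3 : ℕ × ℕ × ℕ → Prop := fun t => X * (t.2.2:ℝ)^2 ≤ Y * Z with hp3
  have cover : ∀ t ∈ G, p1 t ∨ p2 t ∨ p3 t := by
    intro t ht
    by_contra hcon
    push_neg at hcon
    obtain ⟨n1, n2, n3⟩ := hcon
    rw [hp1] at n1; rw [hp2] at n2; rw [hp3] at n3
    simp only [not_le] at n1 n2 n3
    obtain ⟨h1, h2, h3, h4, h5, h6⟩ := hprops t ((hGS t).1 ht)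
    set kr := (t.1:ℝ); set lr := (t.2.1:ℝ); set mr := (t.2.2:ℝ)
    have c1 : (0:ℝ) < kr := Nat.cast_pos.mpr h1
    have c2 : (0:ℝ) < lr := Nat.cast_pos.mpr h2
    have c3 : (0:ℝ) < mr := Nat.cast_pos.mpr h3
    have hX0 : (0:ℝ) < X := by linarith
    have hY0 : (0:ℝ) < Y := by linarith
    have hZ0 : (0:ℝ) < Z := by linarith
    have P1 : (X*Y)*((X*Z)*(Y*Z)) < (Z*kr^2)*((Y*lr^2)*(X*mr^2)) := by
      apply mul_lt_mul'' n1 _ (by positivity) (by positivity)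
      apply mul_lt_mul'' n2 n3 (by positivity) (by positivity)
    have P2 : (kr*lr)*((kr*mr)*(lr*mr)) ≤ X*(Y*Z) := by
      apply mul_le_mul h4 _ (by positivity) hX0.le
      apply mul_le_mul h5 h6 (by positivity) hY0.le
    have P3 : X*(Y*Z)*((kr*lr)*((kr*mr)*(lr*mr))) ≤ X*(Y*Z)*(X*(Y*Z)) :=
      mul_le_mul_of_nonneg_left P2 (by positivity)
    nlinarith [P1, P3]
  -- split into three filters
  set G1 := G.filter p1 with hG1
  set G2 := G.filter p2 with hG2
  set G3 := G.filter p3 with hG3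
  have hcards : (G.card : ℝ) ≤ G1.card + G2.card + G3.card := by
    have hsub2 : G ⊆ G1 ∪ G2 ∪ G3 := by
      intro t ht
      simp only [hG1, hG2, hG3, Finset.mem_union, Finset.mem_filter]
      rcases cover t ht with h | h | h
      · exact Or.inl (Or.inl ⟨ht, h⟩)
      · exact Or.inl (Or.inr ⟨ht, h⟩)
      · exact Or.inr ⟨ht, h⟩
    calc (G.card : ℝ) ≤ ((G1 ∪ G2 ∪ G3).card : ℝ) := by
          exact_mod_cast Finset.card_le_card hsub2
      _ ≤ ((G1 ∪ G2).card : ℝ) + G3.card := by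
          exact_mod_cast Finset.card_union_le _ _
      _ ≤ (G1.card : ℝ) + G2.card + G3.card := by
          have := Finset.card_union_le G1 G2
          have : ((G1 ∪ G2).card : ℝ) ≤ G1.card + G2.card := by exact_mod_cast this
          linarith
  -- bound G3 directly
  have b3 : (G3.card : ℝ) ≤ 10 * (X*Y*Z) ^ ((1:ℝ)/2) := by
    apply core_count X Y Z hX hY hZ
    intro t ht
    rw [hG3, Finset.mem_filter] at ht
    obtain ⟨h1, h2, h3, h4, h5, h6⟩ := hprops t ((hGS t).1 ht.1)
    exact ⟨h1, h2, h3, h4, h5, h6, ht.2⟩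
  -- bound G1 via permutation (k,ℓ,m) ↦ (ℓ,m,k), applying core with (Z,X,Y)
  have b1 : (G1.card : ℝ) ≤ 10 * (X*Y*Z) ^ ((1:ℝ)/2) := by
    set σ : ℕ × ℕ × ℕ → ℕ × ℕ × ℕ := fun t => (t.2.1, t.2.2, t.1) with hσ
    have hinj : Function.Injective σ := by
      intro a b h
      simp only [hσ, Prod.ext_iff] at h ⊢
      tauto
    rw [← Finset.card_image_of_injective G1 hinj]
    have := core_count Z X Y hZ hX hY (G1.image σ) ?_
    · calc ((G1.image σ).card : ℝ) ≤ 10 * (Z*X*Y) ^ ((1:ℝ)/2) := this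
        _ = 10 * (X*Y*Z) ^ ((1:ℝ)/2) := by rw [show Z*X*Y = X*Y*Z by ring]
    · intro s hs
      rw [Finset.mem_image] at hs
      obtain ⟨t, ht, rfl⟩ := hs
      rw [hG1, Finset.mem_filter] at ht
      obtain ⟨h1, h2, h3, h4, h5, h6⟩ := hprops t ((hGS t).1 ht.1)
      refine ⟨h2, h3, h1, h6, ?_, ?_, ?_⟩
      · simp only [hσ]; rw [mul_comm ((t.2.1:ℕ):ℝ)]; exact_mod_cast h4
      · simp only [hσ]; rw [mul_comm ((t.2.2:ℕ):ℝ)]; exact_mod_cast h5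
      · simpa using ht.2
  -- bound G2 via permutation (k,ℓ,m) ↦ (m,k,ℓ), applying core with (Y,Z,X)
  have b2 : (G2.card : ℝ) ≤ 10 * (X*Y*Z) ^ ((1:ℝ)/2) := by
    set σ : ℕ × ℕ × ℕ → ℕ × ℕ × ℕ := fun t => (t.2.2, t.1, t.2.1) with hσ
    have hinj : Function.Injective σ := by
      intro a b h
      simp only [hσ, Prod.ext_iff] at h ⊢
      tauto
    rw [← Finset.card_image_of_injective G2 hinj]
    have := core_count Y Z X hY hZ hX (G2.image σ) ?_
    · calc ((G2.image σ).card : ℝ) ≤ 10 * (Y*Z*X) ^ ((1:ℝ)/2) := this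
        _ = 10 * (X*Y*Z) ^ ((1:ℝ)/2) := by rw [show Y*Z*X = X*Y*Z by ring]
    · intro s hs
      rw [Finset.mem_image] at hs
      obtain ⟨t, ht, rfl⟩ := hs
      rw [hG2, Finset.mem_filter] at ht
      obtain ⟨h1, h2, h3, h4, h5, h6⟩ := hprops t ((hGS t).1 ht.1)
      refine ⟨h3, h1, h2, ?_, ?_, h4, ?_⟩
      · simp only [hσ]; rw [mul_comm ((t.2.2:ℕ):ℝ)]; exact_mod_cast h5
      · simp only [hσ]; rw [mul_comm ((t.2.2:ℕ):ℝ)]; exact_mod_cast h6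
      · have := ht.2
        simp only [hp2] at this
        simp only [hσ]
        calc Y * ((t.2.1:ℕ):ℝ)^2 ≤ X * Z := this
          _ = Z * X := by ring
  linarith [hcards, b1, b2, b3]
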